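/- The exponential mechanism M_EM on quality scores q ∈ ℝ^n, defined by Pr[M_EM(q)=r] = exp(εq_r/(2Δ))/∑_s exp(εq_s/(2Δ)), satisfies: for all q, all r, and all z ∈ [-Δ,Δ]^n, Pr[M_EM(q)=r] ≤ exp(ε)·Pr[M_EM(q+z)=r]. -/

import Mathlib

theorem stmt_16 (n : ℕ) (hn : 1 ≤ n) (ε Δ : ℝ) (hε : 0 < ε) (hΔ : 0 < Δ)
    (q z : Fin n → ℝ) (hz : ∀ i, |z i| ≤ Δ) (r : Fin n) :
    Real.exp (ε * q r / (2 * Δ)) / (∑ s, Real.exp (ε * q s / (2 * Δ)))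
    ≤ Real.exp ε *
      (Real.exp (ε * (q r + z r) / (2 * Δ)) / (∑ s, Real.exp (ε * (q s + z s) / (2 * Δ)))) := by
  have hne : (Finset.univ : Finset (Fin n)).Nonempty := by
    exact Finset.univ_nonempty_iff.mpr (Fin.pos_iff_nonempty.mp hn)
  have hS : 0 < ∑ s, Real.exp (ε * q s / (2 * Δ)) :=
    Finset.sum_pos (fun s _ => Real.exp_pos _) hne
  have hS' : 0 < ∑ s, Real.exp (ε * (q s + z s) / (2 * Δ)) :=
    Finset.sum_pos (fun s _ => Real.exp_pos _) hne
  have key : ∀ x y : ℝ, |y - x| ≤ Δ →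
      Real.exp (ε * x / (2 * Δ)) ≤ Real.exp (ε / 2) * Real.exp (ε * y / (2 * Δ)) := by
    intro x y h
    rw [← Real.exp_add, Real.exp_le_exp]
    have h1 : x - y ≤ Δ := by
      have := (abs_le.mp h).1; linarith
    have h2 : ε * x / (2 * Δ) - ε * y / (2 * Δ) = (ε / (2 * Δ)) * (x - y) := by ring
    have h3 : (ε / (2 * Δ)) * (x - y) ≤ (ε / (2 * Δ)) * Δ := by
      apply mul_le_mul_of_nonneg_left h1 (by positivity)
    have h4 : (ε / (2 * Δ)) * Δ = ε / 2 := by field_simp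
    linarith [h2 ▸ h3.trans_eq h4]
  have hA : Real.exp (ε * q r / (2 * Δ)) ≤
      Real.exp (ε / 2) * Real.exp (ε * (q r + z r) / (2 * Δ)) := by
    apply key; simpa using hz r
  have hB : ∑ s, Real.exp (ε * (q s + z s) / (2 * Δ)) ≤
      Real.exp (ε / 2) * ∑ s, Real.exp (ε * q s / (2 * Δ)) := by
    rw [Finset.mul_sum]
    apply Finset.sum_le_sum
    intro s _
    apply key
    simpa [abs_sub_comm] using hz s
  rw [← mul_div_assoc, div_le_div_iff₀ hS hS']
  have hee : Real.exp (ε / 2) * Real.exp (ε / 2) = Real.exp ε := by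
    rw [← Real.exp_add]; ring_nf
  have h := mul_le_mul hA hB hS'.le (by positivity)
  refine h.trans_eq ?_
  rw [← hee]; ring
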